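/- In the upper half-space model of H³, for any γ ∈ SL₂(ℂ) with c(γ) ≠ 0 and any h > 0, the set of points equidistant from the horizontal horosphere {t = h} (centered at ∞) and the horosphere centered at γ⁻¹(∞) of Euclidean diameter 1/(h|c(γ)|²) is the hemisphere centered at γ⁻¹(∞) of Euclidean radius 1/|c(γ)| (the isometric sphere of γ). -/

import Mathlib

open Complex Matrix

/-- In the upper half-space model of `ℍ³`, for `γ ∈ SL₂(ℂ)` with `c = c(γ) ≠ 0` and
`h > 0`, the set of points `(z, t)` (with `t > 0`) whose signed hyperbolic distance
`log (h / t)` to the horoball `{t ≥ h}` at `∞` equals the signed distance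
`log ((|z - w|² + t²) / (δ t))` to the horoball at `w = γ⁻¹(∞) = -d/c` of Euclidean
diameter `δ = 1/(h |c|²)`, is the hemisphere centered at `γ⁻¹(∞)` of Euclidean radius
`1/|c|` (the isometric sphere of `γ`). -/
theorem stmt6 (γ : Matrix.SpecialLinearGroup (Fin 2) ℂ)
    (a b c d : ℂ) (h : ℝ)
    (ha : a = (γ : Matrix (Fin 2) (Fin 2) ℂ) 0 0) (hb : b = (γ : Matrix (Fin 2) (Fin 2) ℂ) 0 1)
    (hc : c = (γ : Matrix (Fin 2) (Fin 2) ℂ) 1 0) (hd : d = (γ : Matrix (Fin 2) (Fin 2) ℂ) 1 1)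
    (hc0 : c ≠ 0) (hh : 0 < h) :
    {p : ℂ × ℝ | 0 < p.2 ∧
        Real.log (h / p.2) =
          Real.log ((‖p.1 - (-d / c)‖ ^ 2 + p.2 ^ 2) /
            ((1 / (h * ‖c‖ ^ 2)) * p.2))} =
      {p : ℂ × ℝ | 0 < p.2 ∧
        ‖p.1 - (-d / c)‖ ^ 2 + p.2 ^ 2 = (1 / ‖c‖) ^ 2} := by

  have hcabs : (0:ℝ) < ‖c‖ := by simpa using (norm_pos_iff.mpr hc0)
  ext p
  obtain ⟨z, t⟩ := p
  simp only [Set.mem_setOf_eq]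
  constructor
  · rintro ⟨ht, heq⟩
    refine ⟨ht, ?_⟩
    have hA : 0 < ‖z - (-d / c)‖ ^ 2 + t ^ 2 := by positivity
    have hδ : 0 < (1 / (h * ‖c‖ ^ 2)) * t := by positivity
    have h1 : h / t = (‖z - (-d / c)‖ ^ 2 + t ^ 2) /
        ((1 / (h * ‖c‖ ^ 2)) * t) := by
      have := congrArg Real.exp heq
      rwa [Real.exp_log (by positivity), Real.exp_log (div_pos hA hδ)] at this
    field_simp at h1 ⊢
    nlinarith [mul_pos (mul_pos hh (pow_pos hcabs 2)) ht, sq_nonneg (‖z * c + d‖)]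
  · rintro ⟨ht, heq⟩
    refine ⟨ht, ?_⟩
    rw [heq]
    congr 1
    field_simp
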